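/- Every induced cycle of the comparability graph of a finite partially ordered set has even length unless it is a triangle. More precisely, any induced cycle of length at least 4 in a comparability graph has even length. -/

import Mathlib

/-- every induced cycle of length at least 4 in the comparability graph of a
finite poset has even length. (Lengths `≥ 4` are written as `k + 4`.) -/
theorem stmt1 (α : Type*) [Fintype α] [PartialOrder α] (k : ℕ)
    (c : Fin (k + 4) → α) (hinj : Function.Injective c)
    (hcyc : ∀ s t : Fin (k + 4),
      (c s ≠ c t ∧ (c s ≤ c t ∨ c t ≤ c s)) ↔ (t = s + 1 ∨ s = t + 1)) :
    Even (k + 4) := by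
  have adj : ∀ s : Fin (k+4), c s ≠ c (s+1) ∧ (c s ≤ c (s+1) ∨ c (s+1) ≤ c s) :=
    fun s => (hcyc s (s+1)).mpr (Or.inl rfl)
  have nonadj : ∀ s : Fin (k+4), ¬ (c s ≠ c (s+2) ∧ (c s ≤ c (s+2) ∨ c (s+2) ≤ c s)) := by
    intro s h
    rcases (hcyc s (s+2)).mp h with h1 | h2
    · have h2 : (2 : Fin (k+4)) = 1 := add_left_cancel h1
      simp [Fin.ext_iff] at h2
      rw [Nat.mod_eq_of_lt (by omega)] at h2
      omega
    · have h3 : s + 2 + 1 = s + 3 := by open Fin.CommRing in ring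
      rw [h3] at h2
      have h4 : (0 : Fin (k+4)) = 3 := by
        nth_rewrite 1 [show s = s + 0 from (add_zero s).symm] at h2
        exact add_left_cancel h2
      have h5 := congrArg Fin.val h4
      have h6 : ((3 : Fin (k+4)) : ℕ) = 3 % (k+4) := rfl
      rw [h6, Nat.mod_eq_of_lt (by omega), Fin.val_zero] at h5
      omega
  -- alternation of comparability direction
  have alt : ∀ s : Fin (k+4), (c s ≤ c (s+1)) ↔ ¬ (c (s+1) ≤ c (s+1+1)) := by
    intro s
    have h12 : s + 1 + 1 = s + 2 := by open Fin.CommRing in ring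
    rw [h12]
    obtain ⟨hne1, hc1⟩ := adj s
    obtain ⟨hne2, hc2⟩ := adj (s+1)
    rw [h12] at hne2 hc2
    constructor
    · intro h1 h2
      refine nonadj s ⟨fun he => hne2 ?_, Or.inl (h1.trans h2)⟩
      rw [← he] at h2 ⊢
      exact le_antisymm h2 h1
    · intro h2
      rcases hc1 with h | h
      · exact h
      · rcases hc2 with h' | h'
        · exact absurd h' h2
        · refine absurd ⟨fun he => hne1 ?_, Or.inr (h'.trans h)⟩ (nonadj s)
          rw [he] at h ⊢
          exact le_antisymm h' h
  open Fin.CommRing in set Q : ℕ → Prop := fun i => c (i : Fin (k+4)) ≤ c ((i : Fin (k+4)) + 1) with hQ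
  have step : ∀ i : ℕ, Q (i+1) ↔ ¬ Q i := by
    intro i
    open Fin.CommRing in have hcast : ((i+1 : ℕ) : Fin (k+4)) = (i : Fin (k+4)) + 1 := by push_cast; ring
    simp only [hQ, hcast]
    open Fin.CommRing in exact iff_not_comm.mp (alt (i : Fin (k+4)))
  have par : ∀ i : ℕ, (Even i → (Q i ↔ Q 0)) ∧ (¬ Even i → (Q i ↔ ¬ Q 0)) := by
    intro i
    induction i with
    | zero => exact ⟨fun _ => Iff.rfl, fun h => absurd Even.zero h⟩
    | succ n ih =>
      obtain ⟨ih1, ih2⟩ := ih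
      constructor
      · intro he
        have hn : ¬ Even n := by simp [Nat.even_add_one] at he; simpa using he
        rw [step n, ih2 hn]
        exact not_not
      · intro ho
        have hn : Even n := by
          by_contra h
          exact ho (Nat.even_add_one.mpr h)
        rw [step n, ih1 hn]
  have hwrap : Q (k+4) ↔ Q 0 := by
    simp only [hQ, Fin.natCast_self, Nat.cast_zero]
  by_contra hodd
  have := ((par (k+4)).2 hodd)
  rw [hwrap] at this
  exact iff_not_self this
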